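/- Let S and A be finite nonempty types, P : S → A → PMF S a transition kernel, π : S → PMF A a policy, γ a real with 0 ≤ γ < 1, and δ ≥ 0. Let ρ be a PMF on S × A that is invariant under one step of the dynamics: for every g : S × A → ℝ, Σ_{(s,a)} ρ(s,a)·Σ_{s'} P(s,a)(s')·Σ_{a'} π(s')(a')·g(s',a') = Σ_{(s,a)} ρ(s,a)·g(s,a). Let r̂, r* : S → A → ℝ satisfy Σ_{(s,a)} ρ(s,a)·|r̂(s,a) − r*(s,a)| ≤ δ, and let Q_ψ, Q_* : S → A → ℝ satisfy the Bellman equations for (P, π, γ) with rewards r̂ and r* respectively. Then Σ_{(s,a)} ρ(s,a)·|Q_ψ(s,a) − Q_*(s,a)| ≤ δ/(1−γ). -/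

import Mathlib

open Finset

/-- If `ρ` is a stationary state-action distribution and the rewards differ by
at most `δ` in expectation under `ρ`, then the corresponding Q-functions differ
by at most `δ / (1 - γ)` in expectation under `ρ`. -/
theorem q_function_error_upper_bound_stationary
    {S A : Type*} [Fintype S] [Fintype A] [Nonempty S] [Nonempty A]
    (P : S → A → PMF S) (π : S → PMF A) (γ : ℝ) (hγ0 : 0 ≤ γ) (hγ1 : γ < 1)
    (δ : ℝ) (hδ : 0 ≤ δ)
    (ρ : PMF (S × A))
    (hstat : ∀ g : S × A → ℝ,
      ∑ x : S × A, (ρ x).toReal *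
        ∑ s' : S, (P x.1 x.2 s').toReal * ∑ a' : A, (π s' a').toReal * g (s', a')
      = ∑ x : S × A, (ρ x).toReal * g x)
    (rhat rstar : S → A → ℝ)
    (hr : ∑ x : S × A, (ρ x).toReal * |rhat x.1 x.2 - rstar x.1 x.2| ≤ δ)
    (Qψ Qstar : S → A → ℝ)
    (hQψ : ∀ s a, Qψ s a = rhat s a +
      γ * ∑ s' : S, (P s a s').toReal * ∑ a' : A, (π s' a').toReal * Qψ s' a')
    (hQstar : ∀ s a, Qstar s a = rstar s a +
      γ * ∑ s' : S, (P s a s').toReal * ∑ a' : A, (π s' a').toReal * Qstar s' a') :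
    ∑ x : S × A, (ρ x).toReal * |Qψ x.1 x.2 - Qstar x.1 x.2| ≤ δ / (1 - γ) := by
  set D := ∑ x : S × A, (ρ x).toReal * |Qψ x.1 x.2 - Qstar x.1 x.2| with hD
  have hpt : ∀ s a, |Qψ s a - Qstar s a| ≤ |rhat s a - rstar s a| +
      γ * ∑ s' : S, (P s a s').toReal *
        ∑ a' : A, (π s' a').toReal * |Qψ s' a' - Qstar s' a'| := by
    intro s a
    have e : Qψ s a - Qstar s a = (rhat s a - rstar s a) +
        γ * ∑ s' : S, (P s a s').toReal *
          ∑ a' : A, (π s' a').toReal * (Qψ s' a' - Qstar s' a') := by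
      rw [hQψ s a, hQstar s a]
      simp only [mul_sub, Finset.sum_sub_distrib]
      ring
    rw [e]
    refine (abs_add_le _ _).trans (add_le_add_right ?_ _)
    rw [abs_mul, abs_of_nonneg hγ0]
    refine mul_le_mul_of_nonneg_left ?_ hγ0
    refine (Finset.abs_sum_le_sum_abs _ _).trans (Finset.sum_le_sum fun s' _ => ?_)
    rw [abs_mul, abs_of_nonneg ENNReal.toReal_nonneg]
    refine mul_le_mul_of_nonneg_left ?_ ENNReal.toReal_nonneg
    refine (Finset.abs_sum_le_sum_abs _ _).trans (Finset.sum_le_sum fun a' _ => ?_)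
    rw [abs_mul, abs_of_nonneg ENNReal.toReal_nonneg]
  have key : D ≤ δ + γ * D := by
    calc D ≤ ∑ x : S × A, (ρ x).toReal * (|rhat x.1 x.2 - rstar x.1 x.2| +
        γ * ∑ s' : S, (P x.1 x.2 s').toReal *
          ∑ a' : A, (π s' a').toReal * |Qψ s' a' - Qstar s' a'|) := by
          refine Finset.sum_le_sum fun x _ => ?_
          exact mul_le_mul_of_nonneg_left (hpt x.1 x.2) ENNReal.toReal_nonneg
      _ = (∑ x : S × A, (ρ x).toReal * |rhat x.1 x.2 - rstar x.1 x.2|) +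
          γ * ∑ x : S × A, (ρ x).toReal *
            ∑ s' : S, (P x.1 x.2 s').toReal *
              ∑ a' : A, (π s' a').toReal * |Qψ s' a' - Qstar s' a'| := by
          rw [Finset.mul_sum]
          rw [← Finset.sum_add_distrib]
          apply Finset.sum_congr rfl
          intro x _
          ring
      _ ≤ δ + γ * D := by
          refine add_le_add hr ?_
          rw [hstat (fun y => |Qψ y.1 y.2 - Qstar y.1 y.2|)]
  have h1γ : 0 < 1 - γ := by linarith
  rw [le_div_iff₀ h1γ]
  nlinarith [key]
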